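/- The two orthonormal bases of C^2 ⊗ C^3 given by |φ_{m,n}⟩ = (1/√2) Σ_{p=0}^{1} (-1)^{np} |p⟩|p+m mod 3⟩ and |ψ_{m,n}⟩ = (1/√2) Σ_{p=0}^{1} (-1)^{np} |a_p⟩|p+m mod 3⟩, where |a_0⟩ = (1/√3)(|0⟩ - √2 i |1⟩) and |a_1⟩ = (1/√3)(√2|0⟩ + i |1⟩), are mutually unbiased: for all m,n,m',n', |⟨φ_{m,n}|ψ_{m',n'}⟩| = 1/√6. -/

import Mathlib

open Matrix Complex

noncomputable section
set_option maxHeartbeats 4000000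

/-- Trace inner product on coefficient matrices, equal to the inner product of the
corresponding states in `ℂ^m ⊗ ℂ^n`. -/
def matInner {m n : Type*} [Fintype m] [Fintype n] (A B : Matrix m n ℂ) : ℂ :=
  (Aᴴ * B).trace

/-- Coefficient matrix of `|φ_{m,n}⟩ = (1/√2) ∑_p (-1)^{np} |p⟩|(p+m) mod 3⟩`. -/
def phiMat (m : Fin 3) (n : Fin 2) : Matrix (Fin 2) (Fin 3) ℂ := fun p j =>
  (Real.sqrt 2 : ℂ)⁻¹ * (-1 : ℂ) ^ ((n : ℕ) * (p : ℕ)) *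
    (if (j : ℕ) = ((p : ℕ) + (m : ℕ)) % 3 then 1 else 0)

/-- `|a_0⟩ = (1/√3)(|0⟩ - √2 i |1⟩)`, `|a_1⟩ = (1/√3)(√2|0⟩ + i|1⟩)`;
`aVec p q` is the coefficient of `|q⟩` in `|a_p⟩`. -/
def aVec : Fin 2 → Fin 2 → ℂ :=
  ![![(Real.sqrt 3 : ℂ)⁻¹, -(Real.sqrt 2 : ℂ) * Complex.I * (Real.sqrt 3 : ℂ)⁻¹],
    ![(Real.sqrt 2 : ℂ) * (Real.sqrt 3 : ℂ)⁻¹, Complex.I * (Real.sqrt 3 : ℂ)⁻¹]]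

/-- Coefficient matrix of `|ψ_{m,n}⟩ = (1/√2) ∑_p (-1)^{np} |a_p⟩|(p+m) mod 3⟩`. -/
def psiMat (m : Fin 3) (n : Fin 2) : Matrix (Fin 2) (Fin 3) ℂ := fun q j =>
  (Real.sqrt 2 : ℂ)⁻¹ * ∑ p : Fin 2, (-1 : ℂ) ^ ((n : ℕ) * (p : ℕ)) * aVec p q *
    (if (j : ℕ) = ((p : ℕ) + (m : ℕ)) % 3 then 1 else 0)

/-- The two bases `{|φ_{m,n}⟩}` and `{|ψ_{m,n}⟩}` of `ℂ^2 ⊗ ℂ^3` are mutually unbiased: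
all cross inner products have modulus `1/√6`. -/
theorem phi_psi_mutually_unbiased :
    ∀ (m m' : Fin 3) (n n' : Fin 2),
      ‖matInner (phiMat m n) (psiMat m' n')‖ = 1 / Real.sqrt 6 := by
  have h2 : (Real.sqrt 2:ℝ)^2 = 2 := Real.sq_sqrt (by norm_num)
  have h3 : (Real.sqrt 3:ℝ)^2 = 3 := Real.sq_sqrt (by norm_num)
  have h24 : (Real.sqrt 2:ℝ)^4 = 4 := by nlinarith [h2]
  have h26 : (Real.sqrt 2:ℝ)^6 = 8 := by nlinarith [h2]
  have h34 : (Real.sqrt 3:ℝ)^4 = 9 := by nlinarith [h3]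
  have key : (1:ℝ)/6 = (1/Real.sqrt 6)^2 := by
    rw [div_pow, one_pow, Real.sq_sqrt (by norm_num : (6:ℝ) ≥ 0)]
  intro m m' n n'
  rw [Complex.norm_def]
  have hns : Complex.normSq (matInner (phiMat m n) (psiMat m' n')) = 1/6 := by
    fin_cases m <;> fin_cases m' <;> fin_cases n <;> fin_cases n' <;>
    · simp [matInner, Matrix.trace, Matrix.mul_apply, phiMat, psiMat, aVec,
        Fin.sum_univ_succ, Matrix.conjTranspose_apply, Complex.normSq_apply, Complex.ext_iff]
      field_simp
      ring_nf
      norm_num [h2, h3, h24, h26, h34]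
  rw [hns, key]
  exact Real.sqrt_sq (by positivity)
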